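/- For all n ≥ 0, the sequence a defined by a_0 = 1, a_{2n+1} = Σ_{i=0}^{n} a_{2i}·a_{2n-2i}, and a_{2n} = Σ_{i=0}^{2n-1} a_i·a_{2n-1-i} satisfies a_{2n+1} = (2^{n+1}/(2n+2))·C(3n+1, n). -/

import Mathlib

open Finset

def T (r n : ℕ) : ℚ :=
  if r = 0 ∧ n = 0 then 1 else (r : ℚ) / (3 * n + r) * ((3 * n + r).choose n : ℚ)

lemma T_r_zero (r : ℕ) : T r 0 = 1 := by
  rcases Nat.eq_zero_or_pos r with rfl | hr
  · simp [T]
  · rw [T, if_neg (by omega)]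
    simp only [Nat.mul_zero, Nat.zero_add, Nat.choose_zero_right, Nat.cast_one, mul_one,
      Nat.cast_zero, zero_add, mul_zero]
    rw [div_self (by exact_mod_cast hr.ne')]

lemma T_zero (n : ℕ) (h : n ≠ 0) : T 0 n = 0 := by
  rw [T, if_neg (by omega)]
  simp

lemma T_rec (r n : ℕ) : T (r+1) (n+1) = T r (n+1) + T (r+3) n := by
  rw [T, T, T, if_neg (by omega), if_neg (by omega), if_neg (by omega)]
  have e1 : 3*(n+1)+(r+1) = (3*n+r+3)+1 := by ring
  have e2 : 3*(n+1)+r = 3*n+r+3 := by ring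
  have e3 : 3*n+(r+3) = 3*n+r+3 := by ring
  rw [e1, e2, e3, Nat.choose_succ_succ]
  have hX := Nat.choose_succ_right_eq (3*n+r+3) n
  rw [(by omega : 3*n+r+3 - n = 2*n+r+3)] at hX
  have hXq : ((3*n+r+3).choose (n+1) : ℚ) * (n+1) = ((3*n+r+3).choose n : ℚ) * (2*n+r+3) := by
    exact_mod_cast hX
  have d1 : (3*((n:ℚ)+1)+((r:ℚ)+1)) ≠ 0 := by positivity
  have d2 : (3*((n:ℚ)+1)+(r:ℚ)) ≠ 0 := by positivity
  have d3 : (3*(n:ℚ)+((r:ℚ)+3)) ≠ 0 := by positivity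
  push_cast
  field_simp
  linear_combination (3*(3*(n:ℚ)+(r:ℚ)+3)) * hXq

lemma conv : ∀ n s r : ℕ, ∑ i ∈ range (n+1), T (r+1) i * T s (n - i) = T (r+1+s) n := by
  intro n
  induction n with
  | zero => intro s r; simp [T_r_zero]
  | succ n ih =>
    intro s
    induction s with
    | zero =>
      intro r
      rw [Finset.sum_eq_single (n+1)]
      · simp [T_r_zero]
      · intro b hb hbne
        rw [T_zero (n+1-b) (by simp at hb; omega)]
        ring
      · intro hmem; exact absurd (self_mem_range_succ (n+1)) hmem
    | succ s ihs =>
      intro r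
      rw [Finset.sum_range_succ]
      have step : ∑ i ∈ range (n+1), T (r+1) i * T (s+1) (n+1-i)
          = ∑ i ∈ range (n+1), (T (r+1) i * T s (n+1-i) + T (r+1) i * T (s+3) (n-i)) := by
        refine Finset.sum_congr rfl fun i hi => ?_
        have hin : i ≤ n := by simpa [Nat.lt_succ_iff] using hi
        rw [(by omega : n+1-i = (n-i)+1), T_rec, mul_add, (by omega : (n-i)+1 = n+1-i)]
      rw [step, Finset.sum_add_distrib, ih (s+3) r]
      have h1 : (∑ i ∈ range (n+1), T (r+1) i * T s (n+1-i))
          + T (r+1) (n+1) * T (s+1) (n+1-(n+1)) = T (r+1+s) (n+1) := by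
        have ht : T (r+1) (n+1) * T (s+1) (n+1-(n+1)) = T (r+1) (n+1) * T s (n+1-(n+1)) := by
          simp [T_r_zero]
        rw [ht, ← Finset.sum_range_succ (fun i => T (r+1) i * T s (n+1-i))]
        exact ihs r
      have h2 : T (r+1+(s+1)) (n+1) = T (r+1+s) (n+1) + T (r+1+(s+3)) n := by
        have h := T_rec (r+s+1) n
        rwa [(by omega : r+s+1+1 = r+1+(s+1)), (by omega : r+s+1 = r+1+s),
          (by omega : r+1+s+3 = r+1+(s+3))] at h
      linarith [h1, h2]

lemma sum_range_two_mul (f : ℕ → ℚ) (n : ℕ) :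
    ∑ i ∈ range (2*n), f i = ∑ j ∈ range n, (f (2*j) + f (2*j+1)) := by
  induction n with
  | zero => simp
  | succ n ih =>
    rw [(by omega : 2*(n+1) = (2*n+1)+1), Finset.sum_range_succ, Finset.sum_range_succ, ih,
      Finset.sum_range_succ]
    ring

theorem stmt1 (a : ℕ → ℕ) (h0 : a 0 = 1)
    (hodd : ∀ n : ℕ, a (2 * n + 1) = ∑ i ∈ Finset.range (n + 1), a (2 * i) * a (2 * n - 2 * i))
    (heven : ∀ n : ℕ, 1 ≤ n → a (2 * n) = ∑ i ∈ Finset.range (2 * n), a i * a (2 * n - 1 - i)) :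
    ∀ n : ℕ, (a (2 * n + 1) : ℚ) = 2 ^ (n + 1) / (2 * n + 2) * Nat.choose (3 * n + 1) n := by
  have key : ∀ n : ℕ, ((a (2*n) : ℚ) = 2^n * T 1 n) ∧ ((a (2*n+1) : ℚ) = 2^n * T 2 n) := by
    intro n
    induction n using Nat.strong_induction_on with
    | _ n ih =>
      have hav : ∀ k < n, (a (2*k) : ℚ) = 2^k * T 1 k := fun k hk => (ih k hk).1
      have hav1 : ∀ k < n, (a (2*k+1) : ℚ) = 2^k * T 2 k := fun k hk => (ih k hk).2
      have he : (a (2*n) : ℚ) = 2^n * T 1 n := by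
        rcases n with _ | m
        · simpa [T_r_zero] using h0
        · rw [heven (m+1) (by omega)]
          push_cast
          rw [sum_range_two_mul (fun i => (a i : ℚ) * (a (2*(m+1) - 1 - i) : ℚ)) (m+1)]
          have step : ∀ j ∈ range (m+1),
              ((a (2*j) : ℚ) * (a (2*(m+1) - 1 - (2*j)) : ℚ)
                + (a (2*j+1) : ℚ) * (a (2*(m+1) - 1 - (2*j+1)) : ℚ))
              = 2^m * (T 1 j * T 2 (m-j) + T 2 j * T 1 (m-j)) := by
            intro j hj
            have hjm : j ≤ m := by simpa [Nat.lt_succ_iff] using hj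
            rw [(by omega : 2*(m+1) - 1 - (2*j) = 2*(m-j)+1),
              (by omega : 2*(m+1) - 1 - (2*j+1) = 2*(m-j)),
              hav j (by omega), hav1 j (by omega),
              hav (m-j) (by omega), hav1 (m-j) (by omega)]
            have hp : (2:ℚ)^j * 2^(m-j) = 2^m := by
              rw [← pow_add, (by omega : j + (m-j) = m)]
            linear_combination (T 1 j * T 2 (m-j) + T 2 j * T 1 (m-j)) * hp
          rw [Finset.sum_congr rfl step, ← Finset.mul_sum, Finset.sum_add_distrib,
            conv m 2 0, conv m 1 1]
          have hT : T 1 (m+1) = T 3 m := by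
            rw [(by norm_num : (1:ℕ) = 0+1), T_rec, T_zero (m+1) (by omega)]
            norm_num
          rw [hT]
          ring
      have ho : (a (2*n+1) : ℚ) = 2^n * T 2 n := by
        rw [hodd n]
        push_cast
        have hav' : ∀ k ≤ n, (a (2*k) : ℚ) = 2^k * T 1 k := by
          intro k hk
          rcases eq_or_lt_of_le hk with rfl | h
          · exact he
          · exact hav k h
        have step : ∀ i ∈ range (n+1),
            (a (2*i) : ℚ) * (a (2*n - 2*i) : ℚ) = 2^n * (T 1 i * T 1 (n-i)) := by
          intro i hi
          have hin : i ≤ n := by simpa [Nat.lt_succ_iff] using hi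
          rw [(by omega : 2*n - 2*i = 2*(n-i)), hav' i hin, hav' (n-i) (by omega)]
          have hp : (2:ℚ)^i * 2^(n-i) = 2^n := by
            rw [← pow_add, (by omega : i + (n-i) = n)]
          linear_combination (T 1 i * T 1 (n-i)) * hp
        rw [Finset.sum_congr rfl step, ← Finset.mul_sum, conv n 1 0]
      exact ⟨he, ho⟩
  intro n
  rw [(key n).2, T, if_neg (by omega)]
  have hc := Nat.choose_mul_succ_eq (3*n+1) n
  rw [(by omega : 3*n+1+1 = 3*n+2), (by omega : 3*n+2 - n = 2*n+2)] at hc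
  have hcq : ((3*n+1).choose n : ℚ) * (3*n+2) = ((3*n+2).choose n : ℚ) * (2*n+2) := by
    exact_mod_cast hc
  have e : 3*n+2 = 3*n+2 := rfl
  push_cast
  have d1 : (3*(n:ℚ)+2) ≠ 0 := by positivity
  have d2 : (2*(n:ℚ)+2) ≠ 0 := by positivity
  field_simp
  linear_combination (-(2:ℚ)) * 2^n * hcq
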